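/- arXiv:1109.5998 — 2 statements merged into one kernel-verified Lean document; each statement's English description precedes it below -/
import Mathlib

section
/- Let f be a probability density on ℝ^d supported in [0,1]^d that is twice continuously differentiable, with all first partial derivatives bounded in absolute value by L and all second partial derivatives bounded in absolute value by M. Let f̂ be the histogram estimator with bandwidth h = 1/N (N a positive integer) on the regular grid of cubes of side h partitioning [0,1]^d, built from a sample with common density f. Then the bias satisfies ∫|E f̂ − f| ≤ (L d h)/2 + (M d² h²)/4; in particular ∫|E f̂ − f| = O(dh) + O(d²h²). -/
open MeasureTheory Real Filter
open scoped ENNReal Topology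

noncomputable section


-- Fubini for a single-coordinate function on a pi set
lemma pi_setIntegral_eval {d : ℕ} (S : Fin d → Set ℝ) (hS : ∀ j, MeasurableSet (S j))
    (g : Fin d → ℝ → ℝ) :
    ∫ y in Set.univ.pi S, (∏ j, g j (y j)) = ∏ j, ∫ t in S j, g j t := by
  rw [← integral_indicator (MeasurableSet.univ_pi hS)]
  have : Set.indicator (Set.univ.pi S) (fun y : Fin d → ℝ => ∏ j, g j (y j))
      = fun y => ∏ j, Set.indicator (S j) (g j) (y j) := by
    funext y
    by_cases hy : y ∈ Set.univ.pi S
    · rw [Set.indicator_of_mem hy]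
      exact Finset.prod_congr rfl fun j _ =>
        (Set.indicator_of_mem (hy j (Set.mem_univ j)) _).symm
    · rw [Set.indicator_of_notMem hy]
      have : ∃ j, y j ∉ S j := by
        by_contra hc
        push_neg at hc
        exact hy fun j _ => hc j
      obtain ⟨j, hj⟩ := this
      refine (Finset.prod_eq_zero (Finset.mem_univ j) ?_).symm
      exact Set.indicator_of_notMem hj _
  rw [this, MeasureTheory.integral_fintype_prod_volume_eq_prod]
  exact Finset.prod_congr rfl fun j _ => integral_indicator (hS j)

lemma bin_integral_eval {d : ℕ} (a : Fin d → ℝ) (h : ℝ) (i : Fin d) (g : ℝ → ℝ) :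
    ∫ y in Set.univ.pi (fun j => Set.Ico (a j) (a j + h)), g (y i)
      = (∫ t in Set.Ico (a i) (a i + h), g t) * (max h 0) ^ (d - 1) := by
  have := pi_setIntegral_eval (fun j => Set.Ico (a j) (a j + h))
    (fun j => measurableSet_Ico) (fun j t => if j = i then g t else 1)
  simp only [Finset.prod_ite_eq', Finset.mem_univ, if_true] at this
  rw [this, ← Finset.mul_prod_erase Finset.univ _ (Finset.mem_univ i)]
  simp only [if_pos rfl]
  congr 1
  have : ∀ j ∈ Finset.univ.erase i,
      (∫ t in Set.Ico (a j) (a j + h), if j = i then g t else 1) = max h 0 := by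
    intro j hj
    simp only [if_neg (Finset.ne_of_mem_erase hj)]
    rw [setIntegral_const, measureReal_def, Real.volume_Ico, smul_eq_mul, mul_one, add_sub_cancel_left,
      ENNReal.toReal_ofReal']
  rw [Finset.prod_congr rfl this, Finset.prod_const, Finset.card_erase_of_mem (Finset.mem_univ i),
    Finset.card_fin]

lemma taylor_bound {d : ℕ} {f : (Fin d → ℝ) → ℝ} (hf : ContDiff ℝ 2 f) {M : ℝ}
    (hM : ∀ (x : Fin d → ℝ) (i j : Fin d),
      |fderiv ℝ (fun y => fderiv ℝ f y (Pi.single i 1)) x (Pi.single j 1)| ≤ M)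
    (x y : Fin d → ℝ) :
    |f y - f x - fderiv ℝ f x (y - x)| ≤ M / 2 * (∑ i, |y i - x i|) ^ 2 := by
  set Δ : Fin d → ℝ := y - x with hΔ
  set c : ℝ → (Fin d → ℝ) := fun t => x + t • Δ with hc
  have hdf : Differentiable ℝ f := hf.differentiable (by norm_num)
  have hcd : ∀ t : ℝ, HasDerivAt c Δ t := by
    intro t
    have : HasDerivAt (fun s : ℝ => s • Δ) ((1:ℝ) • Δ) t := (hasDerivAt_id t).smul_const Δ
    rw [one_smul] at this
    exact this.const_add x
  -- differentiability of z ↦ fderiv f z v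
  have hψ : ∀ v : Fin d → ℝ, Differentiable ℝ (fun z => fderiv ℝ f z v) := by
    intro v
    have h1 : ContDiff ℝ 1 (fderiv ℝ f) := hf.fderiv_right (by norm_num)
    exact fun z => ((ContinuousLinearMap.apply ℝ ℝ v).differentiable.comp
      (h1.differentiable (by norm_num))) z
  have hψc : ∀ v : Fin d → ℝ, Continuous (fun z => fderiv ℝ f z v) := by
    intro v
    exact (ContinuousLinearMap.apply ℝ ℝ v).continuous.comp (hf.continuous_fderiv (by norm_num))
  set G : ℝ → ℝ := fun t => fderiv ℝ f (c t) Δ with hG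
  have hGc : Continuous G := (hψc Δ).comp (by continuity)
  have hg : ∀ t : ℝ, HasDerivAt (fun s => f (c s)) (G t) t := fun t =>
    (hdf (c t)).hasFDerivAt.comp_hasDerivAt t (hcd t)
  -- decomposition of a vector
  have hdec : ∀ v : Fin d → ℝ, v = ∑ j, v j • (Pi.single j (1:ℝ) : Fin d → ℝ) := by
    intro v
    funext k
    rw [Finset.sum_apply]
    simp [Pi.single_apply, Finset.sum_ite_eq']
  -- second derivative bound
  set K : ℝ := M * (∑ i, |Δ i|) ^ 2 with hK
  have hG' : ∀ t : ℝ, HasDerivAt G (fderiv ℝ (fun z => fderiv ℝ f z Δ) (c t) Δ) t := fun t =>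
    ((hψ Δ (c t)).hasFDerivAt).comp_hasDerivAt t (hcd t)
  have hbound : ∀ z : Fin d → ℝ, |fderiv ℝ (fun z => fderiv ℝ f z Δ) z Δ| ≤ K := by
    intro z
    have hfun : (fun z => fderiv ℝ f z Δ)
        = fun z => ∑ i, Δ i • (fderiv ℝ f z (Pi.single i 1)) := by
      funext z
      rw [show Δ = ∑ j, Δ j • (Pi.single j (1:ℝ) : Fin d → ℝ) from hdec Δ]
      simp [map_sum, _root_.map_smul, smul_eq_mul, Pi.single_apply, Finset.sum_ite_eq', Finset.sum_ite_eq]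
    rw [hfun]
    have hfd : fderiv ℝ (fun z => ∑ i, Δ i • (fderiv ℝ f z (Pi.single i 1))) z
        = ∑ i, Δ i • fderiv ℝ (fun z => fderiv ℝ f z (Pi.single i 1)) z := by
      rw [fderiv_fun_sum (A := fun i z => Δ i • fderiv ℝ f z (Pi.single i 1)) (fun i _ => ((hψ (Pi.single i 1)).const_smul (Δ i)).differentiableAt)]
      congr 1
      funext i
      rw [fderiv_fun_const_smul ((hψ (Pi.single i 1)).differentiableAt)]
    rw [hfd]
    calc |(∑ i, Δ i • fderiv ℝ (fun z => fderiv ℝ f z (Pi.single i 1)) z) Δ|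
        = |∑ i, Δ i * ((fderiv ℝ (fun z => fderiv ℝ f z (Pi.single i 1)) z) Δ)| := by
          rw [ContinuousLinearMap.sum_apply]; simp
      _ ≤ ∑ i, |Δ i| * |(fderiv ℝ (fun z => fderiv ℝ f z (Pi.single i 1)) z) Δ| := by
          refine (Finset.abs_sum_le_sum_abs _ _).trans ?_
          simp [abs_mul, le_refl]
      _ ≤ ∑ i, |Δ i| * (M * ∑ j, |Δ j|) := by
          refine Finset.sum_le_sum fun i _ => ?_
          refine mul_le_mul_of_nonneg_left ?_ (abs_nonneg _)
          -- expand inner application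
          have : (fderiv ℝ (fun z => fderiv ℝ f z (Pi.single i 1)) z) Δ
              = ∑ j, Δ j * ((fderiv ℝ (fun z => fderiv ℝ f z (Pi.single i 1)) z) (Pi.single j 1)) := by
            conv_lhs => rw [show Δ = ∑ j, Δ j • (Pi.single j (1:ℝ) : Fin d → ℝ) from hdec Δ]
            simp [map_sum, _root_.map_smul, smul_eq_mul, Pi.single_apply, Finset.sum_ite_eq', Finset.sum_ite_eq]
          rw [this]
          refine (Finset.abs_sum_le_sum_abs _ _).trans ?_
          rw [Finset.mul_sum]
          refine Finset.sum_le_sum fun j _ => ?_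
          rw [abs_mul, mul_comm M]
          exact mul_le_mul_of_nonneg_left (hM z i j) (abs_nonneg _)
      _ = K := by rw [hK, ← Finset.sum_mul, sq]; ring
  -- Lipschitz estimate for G
  have hlip : ∀ t ∈ Set.Icc (0:ℝ) 1, |G t - G 0| ≤ K * t := by
    intro t ht
    have := Convex.norm_image_sub_le_of_norm_hasDerivWithin_le
      (f := G) (f' := fun t => fderiv ℝ (fun z => fderiv ℝ f z Δ) (c t) Δ) (C := K)
      (fun s _ => (hG' s).hasDerivWithinAt) (fun s _ => by
        rw [Real.norm_eq_abs]; exact hbound (c s)) (convex_Icc 0 1)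
      (Set.left_mem_Icc.mpr zero_le_one) ht
    rw [Real.norm_eq_abs, sub_zero, Real.norm_eq_abs, abs_of_nonneg ht.1] at this
    exact this
  -- FTC
  have hu : ∀ t : ℝ, HasDerivAt (fun s => f (c s) - s * G 0) (G t - G 0) t := by
    intro t
    exact (hg t).sub (hasDerivAt_mul_const (G 0))
  have hftc : ∫ t in (0:ℝ)..1, (G t - G 0)
      = (f (c 1) - 1 * G 0) - (f (c 0) - 0 * G 0) := by
    exact intervalIntegral.integral_eq_sub_of_hasDerivAt (fun t _ => hu t)
      ((hGc.sub continuous_const).intervalIntegrable 0 1)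
  have hKnn : 0 ≤ K := le_trans (abs_nonneg _) (hbound x)
  have hnorm : |∫ t in (0:ℝ)..1, (G t - G 0)| ≤ K / 2 := by
    have hb : ∀ t ∈ Set.uIoc (0:ℝ) 1, ‖G t - G 0‖ ≤ K * t := by
      intro t ht
      rw [Set.uIoc_of_le zero_le_one] at ht
      exact (Real.norm_eq_abs _) ▸ hlip t ⟨ht.1.le, ht.2⟩
    have := intervalIntegral.norm_integral_le_of_norm_le
      (g := fun t => K * t) zero_le_one (Filter.Eventually.of_forall fun t ht => hb t (by rw [Set.uIoc_of_le zero_le_one]; exact ht))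
      ((continuous_const.mul continuous_id).intervalIntegrable (μ := volume) 0 1)
    rw [Real.norm_eq_abs] at this
    refine this.trans ?_
    rw [intervalIntegral.integral_const_mul, integral_id]
    nlinarith [hKnn]
  -- conclude
  have hc0 : c 0 = x := by simp [hc]
  have hc1 : c 1 = y := by funext k; simp [hc, hΔ]
  have hG0 : G 0 = fderiv ℝ f x (y - x) := by
    rw [show G 0 = fderiv ℝ f (c 0) Δ from rfl, hc0, hΔ]
  rw [hftc, hc0, hc1] at hnorm
  calc |f y - f x - fderiv ℝ f x (y - x)|
      = |f y - 1 * G 0 - (f x - 0 * G 0)| := by rw [hG0]; ring_nf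
    _ ≤ K / 2 := hnorm
    _ = M / 2 * (∑ i, |Δ i|) ^ 2 := by rw [hK]; ring
    _ = M / 2 * (∑ i, |y i - x i|) ^ 2 := by simp [hΔ]

lemma oneD_lin {a h x : ℝ} (hh : 0 < h) (hx : x ∈ Set.Ico a (a + h)) :
    |∫ t in Set.Ico a (a + h), (t - x)| ≤ h ^ 2 / 2 := by
  have hab : a ≤ a + h := by linarith
  rw [setIntegral_congr_set Ico_ae_eq_Ioc, ← intervalIntegral.integral_of_le hab]
  have : ∫ t in a..(a + h), (t - x) = ∫ t in (a - x)..(a + h - x), t :=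
    (intervalIntegral.integral_comp_sub_right (fun t => t) x)
  rw [this, integral_id]
  obtain ⟨h1, h2⟩ := hx
  rw [abs_le]
  constructor <;> nlinarith

lemma oneD_sq {a h x : ℝ} (hh : 0 < h) (hx : x ∈ Set.Ico a (a + h)) :
    ∫ t in Set.Ico a (a + h), (t - x) ^ 2 ≤ h ^ 3 / 3 := by
  have hab : a ≤ a + h := by linarith
  rw [setIntegral_congr_set Ico_ae_eq_Ioc, ← intervalIntegral.integral_of_le hab]
  have : ∫ t in a..(a + h), (t - x) ^ 2 = ∫ t in (a - x)..(a + h - x), t ^ 2 :=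
    (intervalIntegral.integral_comp_sub_right (fun t => t ^ 2) x)
  rw [this, integral_pow]
  obtain ⟨h1, h2⟩ := hx
  push_cast
  nlinarith [sq_nonneg (a - x), sq_nonneg (a + h - x), sq_nonneg x]

lemma bin_pointwise {d : ℕ} (hd : 0 < d) {L M h : ℝ} (hh : 0 < h)
    {f : (Fin d → ℝ) → ℝ} (hsmooth : ContDiff ℝ 2 f)
    (hL : ∀ (x : Fin d → ℝ) (i : Fin d), |fderiv ℝ f x (Pi.single i 1)| ≤ L)
    (hM : ∀ (x : Fin d → ℝ) (i j : Fin d),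
      |fderiv ℝ (fun y => fderiv ℝ f y (Pi.single i 1)) x (Pi.single j 1)| ≤ M)
    (a x : Fin d → ℝ) (hx : x ∈ Set.univ.pi fun i => Set.Ico (a i) (a i + h)) :
    |(h ^ d)⁻¹ * (∫ y in Set.univ.pi fun i => Set.Ico (a i) (a i + h), f y) - f x|
      ≤ L * d * h / 2 + M * d ^ 2 * h ^ 2 / 4 := by
  set B : Set (Fin d → ℝ) := Set.univ.pi fun i => Set.Ico (a i) (a i + h) with hB
  have hL0 : 0 ≤ L := (abs_nonneg _).trans (hL x ⟨0, hd⟩)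
  have hM0 : 0 ≤ M := (abs_nonneg _).trans (hM x ⟨0, hd⟩ ⟨0, hd⟩)
  have hBK : B ⊆ Set.univ.pi fun i => Set.Icc (a i) (a i + h) :=
    Set.pi_mono fun i _ => Set.Ico_subset_Icc_self
  have hK : IsCompact (Set.univ.pi fun i => Set.Icc (a i) (a i + h)) :=
    isCompact_univ_pi fun i => isCompact_Icc
  have hint : ∀ g : (Fin d → ℝ) → ℝ, Continuous g → IntegrableOn g B := fun g hg =>
    (hg.continuousOn.integrableOn_compact hK).mono_set hBK
  have hfc : Continuous f := hsmooth.continuous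
  -- volume of the bin
  have hvol : (volume B).toReal = h ^ d := by
    rw [hB, volume_pi_pi]
    simp only [Real.volume_Ico, add_sub_cancel_left]
    rw [Finset.prod_const, ENNReal.toReal_pow, ENNReal.toReal_ofReal hh.le, Finset.card_fin]
  have hconst : ∫ _ in B, f x = h ^ d * f x := by
    rw [setIntegral_const, measureReal_def, hvol, smul_eq_mul]
  -- reduce to centered integral
  have hred : (h ^ d)⁻¹ * (∫ y in B, f y) - f x
      = (h ^ d)⁻¹ * ∫ y in B, (f y - f x) := by
    rw [integral_sub (hint f hfc) (hint _ continuous_const), hconst]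
    field_simp
  rw [hred]
  -- split into linear + remainder
  set c : Fin d → ℝ := fun i => fderiv ℝ f x (Pi.single i 1) with hcdef
  have hlin_cont : Continuous fun y : Fin d → ℝ => fderiv ℝ f x (y - x) :=
    (fderiv ℝ f x).continuous.comp (continuous_id.sub continuous_const)
  have hsplit : ∫ y in B, (f y - f x)
      = (∫ y in B, fderiv ℝ f x (y - x)) + ∫ y in B, (f y - f x - fderiv ℝ f x (y - x)) := by
    rw [← integral_add (hint _ hlin_cont)
      (hint (fun y => f y - f x - fderiv ℝ f x (y - x)) ((hfc.sub continuous_const).sub hlin_cont))]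
    congr 1; funext y; ring
  -- linear part
  have hdec : ∀ v : Fin d → ℝ, v = ∑ j, v j • (Pi.single j (1:ℝ) : Fin d → ℝ) := by
    intro v; funext k; rw [Finset.sum_apply]
    simp [Pi.single_apply, Finset.sum_ite_eq']
  have hlin_eq : ∀ y : Fin d → ℝ, fderiv ℝ f x (y - x) = ∑ i, (y i - x i) * c i := by
    intro y
    conv_lhs => rw [hdec (y - x)]
    simp [map_sum, _root_.map_smul, smul_eq_mul, hcdef]
  have hlin_int : ∫ y in B, fderiv ℝ f x (y - x)
      = ∑ i, c i * ((∫ t in Set.Ico (a i) (a i + h), (t - x i)) * (max h 0) ^ (d - 1)) := by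
    simp_rw [hlin_eq]
    rw [integral_finset_sum]
    · refine Finset.sum_congr rfl fun i _ => ?_
      rw [integral_mul_const, mul_comm]
      congr 1
      exact bin_integral_eval a h i (fun t => t - x i)
    · exact fun i _ => hint _ (((continuous_apply i).sub continuous_const).mul continuous_const)
  -- bound on the linear part
  have hq0 : (0:ℝ) < h ^ (d - 1) := pow_pos hh _
  have hlin_bd : |∫ y in B, fderiv ℝ f x (y - x)| ≤ (d : ℝ) * (L * (h ^ 2 / 2 * h ^ (d - 1))) := by
    rw [hlin_int]
    refine (Finset.abs_sum_le_sum_abs _ _).trans ?_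
    have hterm : ∀ i : Fin d, |c i * ((∫ t in Set.Ico (a i) (a i + h), (t - x i))
        * (max h 0) ^ (d - 1))| ≤ L * (h ^ 2 / 2 * h ^ (d - 1)) := by
      intro i
      rw [abs_mul, abs_mul, max_eq_left hh.le, abs_of_nonneg (pow_nonneg hh.le _)]
      have h1 : |∫ t in Set.Ico (a i) (a i + h), (t - x i)| ≤ h ^ 2 / 2 :=
        oneD_lin hh (hx i (Set.mem_univ i))
      exact mul_le_mul (hL x i)
        (mul_le_mul_of_nonneg_right h1 (pow_nonneg hh.le _)) (by positivity) hL0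
    refine (Finset.sum_le_sum fun i _ => hterm i).trans ?_
    rw [Finset.sum_const, Finset.card_fin, nsmul_eq_mul]
  -- bound on the remainder
  have hrem_bd : |∫ y in B, (f y - f x - fderiv ℝ f x (y - x))|
      ≤ M / 2 * ((d : ℝ) * ((d : ℝ) * (h ^ 3 / 3 * h ^ (d - 1)))) := by
    have habs : |∫ y in B, (f y - f x - fderiv ℝ f x (y - x))|
        ≤ ∫ y in B, |f y - f x - fderiv ℝ f x (y - x)| := by
      simpa [Real.norm_eq_abs] using norm_integral_le_integral_norm
        (μ := volume.restrict B) (fun y => f y - f x - fderiv ℝ f x (y - x))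
    refine habs.trans ?_
    have hpt : ∀ y ∈ B, |f y - f x - fderiv ℝ f x (y - x)|
        ≤ M / 2 * ((d : ℝ) * ∑ i, (y i - x i) ^ 2) := by
      intro y _
      refine (taylor_bound hsmooth hM x y).trans ?_
      refine mul_le_mul_of_nonneg_left ?_ (by positivity)
      have := sq_sum_le_card_mul_sum_sq (s := Finset.univ) (f := fun i => |y i - x i|)
      simpa [sq_abs, Finset.card_fin] using this
    have hBm : MeasurableSet B := MeasurableSet.univ_pi fun i => measurableSet_Ico
    have hmono : ∫ y in B, |f y - f x - fderiv ℝ f x (y - x)|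
        ≤ ∫ y in B, M / 2 * ((d : ℝ) * ∑ i, (y i - x i) ^ 2) := by
      refine setIntegral_mono_on (hint _ (by fun_prop)) (hint _ (by fun_prop)) hBm hpt
    refine hmono.trans ?_
    rw [integral_const_mul]
    refine mul_le_mul_of_nonneg_left ?_ (by positivity)
    rw [integral_const_mul]
    refine mul_le_mul_of_nonneg_left ?_ (by positivity)
    rw [integral_finset_sum _ (fun i _ => hint _ (by fun_prop))]
    have hterm : ∀ i : Fin d, ∫ y in B, (y i - x i) ^ 2 ≤ h ^ 3 / 3 * h ^ (d - 1) := by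
      intro i
      have := bin_integral_eval a h i (fun t => (t - x i) ^ 2)
      rw [max_eq_left hh.le] at this
      rw [this]
      exact mul_le_mul_of_nonneg_right (oneD_sq hh (hx i (Set.mem_univ i))) (pow_nonneg hh.le _)
    refine (Finset.sum_le_sum fun i _ => hterm i).trans ?_
    rw [Finset.sum_const, Finset.card_fin, nsmul_eq_mul]
  -- combine
  have hhd : h ^ d = h ^ (d - 1) * h := by
    have hd1 : d - 1 + 1 = d := by omega
    conv_lhs => rw [← hd1]
    rw [pow_succ]
  have hdr : (1:ℝ) ≤ d := by exact_mod_cast hd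
  rw [hsplit]
  have habs2 : |(h ^ d)⁻¹ * ((∫ y in B, fderiv ℝ f x (y - x))
      + ∫ y in B, (f y - f x - fderiv ℝ f x (y - x)))|
      ≤ (h ^ d)⁻¹ * ((d : ℝ) * (L * (h ^ 2 / 2 * h ^ (d - 1)))
        + M / 2 * ((d : ℝ) * ((d : ℝ) * (h ^ 3 / 3 * h ^ (d - 1))))) := by
    rw [abs_mul, abs_of_nonneg (by positivity : (0:ℝ) ≤ (h ^ d)⁻¹)]
    refine mul_le_mul_of_nonneg_left ?_ (by positivity)
    exact (abs_add_le _ _).trans (add_le_add hlin_bd hrem_bd)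
  refine habs2.trans ?_
  rw [hhd]
  have hq : h ^ (d - 1) ≠ 0 := ne_of_gt hq0
  have hhne : h ≠ 0 := ne_of_gt hh
  have heq : ((h ^ (d - 1) * h)⁻¹ * ((d : ℝ) * (L * (h ^ 2 / 2 * h ^ (d - 1)))
      + M / 2 * ((d : ℝ) * ((d : ℝ) * (h ^ 3 / 3 * h ^ (d - 1))))))
      = L * d * h / 2 + M * d ^ 2 * h ^ 2 / 6 := by
    field_simp
    ring
  rw [heq]
  have : 0 ≤ M * (d:ℝ) ^ 2 * h ^ 2 := by positivity
  linarith

lemma floor_div_eq {h t : ℝ} (hh : 0 < h) (m : ℤ) :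
    ⌊t / h⌋ = m ↔ t ∈ Set.Ico ((m : ℝ) * h) ((m : ℝ) * h + h) := by
  rw [Int.floor_eq_iff, Set.mem_Ico]
  constructor
  · rintro ⟨h1, h2⟩
    have h1' := (le_div_iff₀ hh).mp h1
    have h2' := (div_lt_iff₀ hh).mp h2
    constructor <;> push_cast at * <;> nlinarith
  · rintro ⟨h1, h2⟩
    constructor
    · rw [le_div_iff₀ hh]; linarith
    · rw [div_lt_iff₀ hh]; push_cast; linarith

lemma coord_hyperplane_null {d : ℕ} (i : Fin d) :
    volume {y : Fin d → ℝ | y i = 1} = 0 := by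
  have : {y : Fin d → ℝ | y i = 1}
      = Set.univ.pi (Function.update (fun _ => (Set.univ : Set ℝ)) i {1}) := by
    ext y
    simp only [Set.mem_setOf_eq, Set.mem_pi, Set.mem_univ, forall_true_left]
    constructor
    · intro hy j
      rcases eq_or_ne j i with rfl | hj
      · simp [Function.update, hy]
      · simp [Function.update, hj]
    · intro hy
      have := hy i
      simpa [Function.update] using this
  rw [this, volume_pi_pi]
  refine Finset.prod_eq_zero (Finset.mem_univ i) ?_
  simp [Function.update]


/-- Histogram estimator with bandwidth `h` built from the points `z 0, …, z (N-1)` in `ℝ^k`: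
`f̂(x) = (N h^k)⁻¹ Σᵢ 1{zᵢ ∈ B(x)}` where `B(x)` is the grid cube of side `h` containing `x`. -/
def histo {k : ℕ} (h : ℝ) {N : ℕ} (z : Fin N → Fin k → ℝ) (x : Fin k → ℝ) : ℝ :=
  ((N : ℝ) * h ^ k)⁻¹ *
    ∑ i : Fin N, if ∀ j, ⌊z i j / h⌋ = ⌊x j / h⌋ then (1 : ℝ) else 0

/-- **Lemma (bias of the histogram).** For a twice continuously differentiable density `f` on
`ℝ^d` supported in `[0,1]^d`, with first partials bounded by `L` and second partials bounded
by `M`, the histogram with bandwidth `h = 1/N` has pointwise expectation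
`E f̂(x) = p_{B(x)}/h^d` (with `B(x)` the grid cube containing `x`), and its bias satisfies
`∫|E f̂ − f| ≤ L d h / 2 + M d² h² / 4`. -/
theorem histogram_bias_bound
    (d N : ℕ) (hd : 0 < d) (hN : 0 < N) (L M : ℝ)
    (f : (Fin d → ℝ) → ℝ)
    (hsmooth : ContDiff ℝ 2 f)
    (hf0 : ∀ x, 0 ≤ f x) (hf1 : ∫ x, f x = 1)
    (hsupp : ∀ x : Fin d → ℝ, (∃ i, x i < 0 ∨ 1 < x i) → f x = 0)
    (hL : ∀ (x : Fin d → ℝ) (i : Fin d), |fderiv ℝ f x (Pi.single i 1)| ≤ L)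
    (hM : ∀ (x : Fin d → ℝ) (i j : Fin d),
      |fderiv ℝ (fun y => fderiv ℝ f y (Pi.single i 1)) x (Pi.single j 1)| ≤ M) :
    ∫ x : Fin d → ℝ,
        |((N : ℝ) ^ d) *
            (∫ y in {y : Fin d → ℝ | ∀ i, ⌊y i / ((N : ℝ)⁻¹)⌋ = ⌊x i / ((N : ℝ)⁻¹)⌋}, f y)
          - f x| ≤
      L * d * (N : ℝ)⁻¹ / 2 + M * (d : ℝ) ^ 2 * ((N : ℝ)⁻¹) ^ 2 / 4 := by
  have hNR : (0:ℝ) < N := by exact_mod_cast hN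
  set h : ℝ := (N : ℝ)⁻¹ with hhdef
  have hh : 0 < h := by positivity
  set C : ℝ := L * d * h / 2 + M * (d : ℝ) ^ 2 * h ^ 2 / 4 with hC
  have hL0 : 0 ≤ L := (abs_nonneg _).trans (hL 0 ⟨0, hd⟩)
  have hM0 : 0 ≤ M := (abs_nonneg _).trans (hM 0 ⟨0, hd⟩ ⟨0, hd⟩)
  have hC0 : 0 ≤ C := by rw [hC]; positivity
  have hNd : ((N : ℝ)) ^ d = (h ^ d)⁻¹ := by
    rw [hhdef, ← inv_pow, inv_inv]
  -- the bins
  have hbin : ∀ x : Fin d → ℝ, {y : Fin d → ℝ | ∀ i, ⌊y i / h⌋ = ⌊x i / h⌋}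
      = Set.univ.pi fun i => Set.Ico ((⌊x i / h⌋ : ℝ) * h) ((⌊x i / h⌋ : ℝ) * h + h) := by
    intro x
    ext y
    simp only [Set.mem_setOf_eq, Set.mem_pi, Set.mem_univ, forall_true_left]
    exact forall_congr' fun i => floor_div_eq hh _
  have hxmem : ∀ x : Fin d → ℝ,
      x ∈ Set.univ.pi fun i => Set.Ico ((⌊x i / h⌋ : ℝ) * h) ((⌊x i / h⌋ : ℝ) * h + h) := by
    intro x i _
    exact (floor_div_eq hh _).mp rfl
  have hBm : ∀ x : Fin d → ℝ, MeasurableSet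
      (Set.univ.pi fun i => Set.Ico ((⌊x i / h⌋ : ℝ) * h) ((⌊x i / h⌋ : ℝ) * h + h)) :=
    fun x => MeasurableSet.univ_pi fun i => measurableSet_Ico
  set G : Set (Fin d → ℝ) := Set.univ.pi fun _ => Set.Ico (0:ℝ) 1 with hG
  have hGm : MeasurableSet G := MeasurableSet.univ_pi fun i => measurableSet_Ico
  -- vanishing outside
  have hzero : ∀ x : Fin d → ℝ, (∃ i, x i < 0 ∨ 1 < x i) →
      ((N : ℝ) ^ d) * (∫ y in {y : Fin d → ℝ | ∀ i, ⌊y i / h⌋ = ⌊x i / h⌋}, f y) - f x = 0 := by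
    intro x hex
    obtain ⟨i, hi⟩ := hex
    rw [hsupp x ⟨i, hi⟩, sub_zero, hbin x]
    have hzint : (∫ y in Set.univ.pi fun i =>
        Set.Ico ((⌊x i / h⌋ : ℝ) * h) ((⌊x i / h⌋ : ℝ) * h + h), f y) = 0 := by
      rcases hi with hi | hi
      · -- x i < 0 : the bin lies in {y i < 0}
        have hm : ⌊x i / h⌋ < 0 := Int.floor_lt.mpr (by
          push_cast
          exact div_neg_of_neg_of_pos hi hh)
        rw [setIntegral_congr_fun (hBm x) (fun y hy => ?_), integral_zero]
        refine hsupp y ⟨i, Or.inl ?_⟩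
        have := (hy i (Set.mem_univ i)).2
        have hm1 : ((⌊x i / h⌋ : ℝ) + 1) ≤ 0 := by
          have hm2 : ⌊x i / h⌋ ≤ -1 := by omega
          have : (⌊x i / h⌋ : ℝ) ≤ -1 := by exact_mod_cast hm2
          linarith
        nlinarith
      · -- 1 < x i : the bin lies in {y i ≥ 1}, f vanishes a.e. there
        have hNh : (N:ℝ) * h = 1 := by rw [hhdef]; field_simp
        have hm : (N : ℤ) ≤ ⌊x i / h⌋ := Int.le_floor.mpr (by
          rw [le_div_iff₀ hh]
          push_cast
          linarith)
        have hm' : (1:ℝ) ≤ (⌊x i / h⌋ : ℝ) * h := by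
          have : (N:ℝ) ≤ (⌊x i / h⌋ : ℝ) := by exact_mod_cast hm
          nlinarith
        refine integral_eq_zero_of_ae ?_
        rw [Filter.EventuallyEq, ae_restrict_iff' (hBm x)]
        have hnull : ∀ᵐ y : Fin d → ℝ, y ∉ {y : Fin d → ℝ | y i = 1} :=
          measure_eq_zero_iff_ae_notMem.mp (coord_hyperplane_null i)
        refine hnull.mono fun y hy hymem => ?_
        by_contra hfy
        have hy1 : y i ≤ 1 := by
          by_contra hgt
          exact hfy (hsupp y ⟨i, Or.inr (not_le.mp hgt)⟩)
        have hy2 : 1 ≤ y i := le_trans hm' (hymem i (Set.mem_univ i)).1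
        exact hy (le_antisymm hy1 hy2)
    rw [hzint, mul_zero]
  -- main comparison
  have hvolG : volume G = 1 := by
    rw [hG, volume_pi_pi]
    simp [Real.volume_Ico]
  have hae : ∀ᵐ x : Fin d → ℝ, ∀ i, x i ≠ 1 := by
    rw [ae_all_iff]
    intro i
    exact measure_eq_zero_iff_ae_notMem.mp (coord_hyperplane_null i)
  have key : ∀ᵐ x : Fin d → ℝ,
      |((N : ℝ) ^ d) * (∫ y in {y : Fin d → ℝ | ∀ i, ⌊y i / h⌋ = ⌊x i / h⌋}, f y) - f x|
        ≤ Set.indicator G (fun _ => C) x := by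
    refine hae.mono fun x hx => ?_
    by_cases hxG : x ∈ G
    · rw [Set.indicator_of_mem hxG]
      have hb := bin_pointwise hd hh hsmooth hL hM
        (fun i => (⌊x i / h⌋ : ℝ) * h) x (hxmem x)
      rw [hbin x, hNd]
      exact hb
    · rw [Set.indicator_of_notMem hxG]
      have hex : ∃ i, x i < 0 ∨ 1 < x i := by
        rw [hG] at hxG
        simp only [Set.mem_pi, Set.mem_univ, forall_true_left, Set.mem_Ico, not_forall] at hxG
        obtain ⟨i, hi⟩ := hxG
        rw [not_and_or, not_le, not_lt] at hi
        rcases hi with hi | hi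
        · exact ⟨i, Or.inl hi⟩
        · exact ⟨i, Or.inr (lt_of_le_of_ne hi (Ne.symm (hx i)))⟩
      rw [hzero x hex, abs_zero]
  have hnn : 0 ≤ᵐ[volume] fun x : Fin d → ℝ =>
      |((N : ℝ) ^ d) * (∫ y in {y : Fin d → ℝ | ∀ i, ⌊y i / h⌋ = ⌊x i / h⌋}, f y) - f x| :=
    Filter.Eventually.of_forall fun x => abs_nonneg _
  have hbint : Integrable (Set.indicator G fun _ => C) := by
    refine ((integrableOn_const_iff).mpr (Or.inr ?_)).integrable_indicator hGm
    rw [hvolG]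
    exact ENNReal.one_lt_top
  calc ∫ x : Fin d → ℝ,
        |((N : ℝ) ^ d) * (∫ y in {y : Fin d → ℝ | ∀ i, ⌊y i / h⌋ = ⌊x i / h⌋}, f y) - f x|
      ≤ ∫ x : Fin d → ℝ, Set.indicator G (fun _ => C) x :=
        integral_mono_of_nonneg hnn hbint key
    _ = C := by
        rw [integral_indicator_const _ hGm, measureReal_def, hvolG]
        simp
end
end

section
/- Let f be a probability density on ℝ^k and let f̂ and f̂' be histogram estimators with the same bandwidth h and the same grid, built respectively from sample points (z_1,…,z_N) and (z'_1,…,z'_N) in ℝ^k that differ in exactly one point (z_i = z'_i for all i ≠ j). Then ∫|f̂ − f̂'| ≤ 2/N, and consequently the L¹ loss g(z_1,…,z_N) = ∫|f̂ − f| satisfies the bounded-differences condition |g(z_1,…,z_N) − g(z'_1,…,z'_N)| ≤ 2/N. -/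
open MeasureTheory Real Filter
open scoped ENNReal Topology

noncomputable section

def cube {k : ℕ} (h : ℝ) (w : Fin k → ℝ) : Set (Fin k → ℝ) :=
  {x | ∀ j, ⌊w j / h⌋ = ⌊x j / h⌋}

lemma cube_eq {k : ℕ} {h : ℝ} (hh : 0 < h) (w : Fin k → ℝ) :
    cube h w = Set.pi Set.univ
      (fun j => Set.Ico ((⌊w j / h⌋ : ℝ) * h) (((⌊w j / h⌋ : ℝ) + 1) * h)) := by
  ext x
  simp only [cube, Set.mem_setOf_eq, Set.mem_pi, Set.mem_univ, forall_true_left, Set.mem_Ico]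
  refine forall_congr' fun j => ?_
  rw [eq_comm, Int.floor_eq_iff, le_div_iff₀ hh, div_lt_iff₀ hh]

lemma cube_meas {k : ℕ} {h : ℝ} (hh : 0 < h) (w : Fin k → ℝ) :
    MeasurableSet (cube h w) := by
  rw [cube_eq hh]
  exact MeasurableSet.univ_pi fun j => measurableSet_Ico

lemma cube_vol {k : ℕ} {h : ℝ} (hh : 0 < h) (w : Fin k → ℝ) :
    volume (cube h w) = ENNReal.ofReal h ^ k := by
  rw [cube_eq hh, volume_pi_pi]
  have : ∀ j : Fin k, volume (Set.Ico ((⌊w j / h⌋ : ℝ) * h) (((⌊w j / h⌋ : ℝ) + 1) * h))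
      = ENNReal.ofReal h := by
    intro j
    rw [Real.volume_Ico]
    congr 1
    ring
  simp [this]

lemma ind_integrable {k : ℕ} {h : ℝ} (hh : 0 < h) (w : Fin k → ℝ) :
    Integrable ((cube h w).indicator (fun _ => (1:ℝ))) := by
  rw [integrable_indicator_iff (cube_meas hh w)]
  apply integrableOn_const
  rw [cube_vol hh w]
  · exact (ENNReal.pow_lt_top ENNReal.ofReal_lt_top).ne
  · simp

lemma ind_integral {k : ℕ} {h : ℝ} (hh : 0 < h) (w : Fin k → ℝ) :
    ∫ x, (cube h w).indicator (fun _ => (1:ℝ)) x = h ^ k := by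
  have := integral_indicator_one (μ := volume) (cube_meas hh w)
  rw [show ((fun _ => (1:ℝ)) : (Fin k → ℝ) → ℝ) = (1 : (Fin k → ℝ) → ℝ) from rfl, this,
    measureReal_def, cube_vol hh w, ← ENNReal.ofReal_pow hh.le, ENNReal.toReal_ofReal (by positivity)]


lemma histo_eq {k N : ℕ} {h : ℝ} (z : Fin N → Fin k → ℝ) (x : Fin k → ℝ) :
    histo h z x = ((N : ℝ) * h ^ k)⁻¹ *
      ∑ i : Fin N, (cube h (z i)).indicator (fun _ => (1:ℝ)) x := by
  simp [histo, Set.indicator_apply, cube, Set.mem_setOf_eq]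

lemma histo_integrable {k N : ℕ} {h : ℝ} (hh : 0 < h) (z : Fin N → Fin k → ℝ) :
    Integrable (histo h z) := by
  have : histo h z = fun x => ((N : ℝ) * h ^ k)⁻¹ *
      ∑ i : Fin N, (cube h (z i)).indicator (fun _ => (1:ℝ)) x := by
    funext x; exact histo_eq z x
  rw [this]
  exact (integrable_finset_sum _ fun i _ => ind_integrable hh (z i)).const_mul _


/-- **Lemma (bounded differences for the histogram L¹ loss).** Two histograms with the same
bandwidth and grid, built from samples differing in exactly one point, satisfy
`∫|f̂ − f̂'| ≤ 2/N`; hence the L¹ loss `g(z) = ∫|f̂ − f|` satisfies the bounded-differences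
condition `|g(z) − g(z')| ≤ 2/N`. -/
theorem histogram_bounded_differences
    (k N : ℕ) (hN : 0 < N) (h : ℝ) (hh : 0 < h)
    (f : (Fin k → ℝ) → ℝ) (hf0 : ∀ x, 0 ≤ f x) (hf1 : ∫ x, f x = 1)
    (z z' : Fin N → Fin k → ℝ) (j : Fin N)
    (hdiff : ∀ i, i ≠ j → z i = z' i) :
    (∫ x, |histo h z x - histo h z' x|) ≤ 2 / N ∧
    abs ((∫ x, |histo h z x - f x|) - ∫ x, |histo h z' x - f x|) ≤ 2 / N := by
  set c : ℝ := ((N : ℝ) * h ^ k)⁻¹ with hc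
  have hc0 : 0 ≤ c := by positivity
  set I : (Fin k → ℝ) → ℝ := (cube h (z j)).indicator (fun _ => (1:ℝ)) with hI
  set I' : (Fin k → ℝ) → ℝ := (cube h (z' j)).indicator (fun _ => (1:ℝ)) with hI'
  have hIint : Integrable I := ind_integrable hh (z j)
  have hI'int : Integrable I' := ind_integrable hh (z' j)
  have hInn : ∀ x, 0 ≤ I x := fun x => Set.indicator_nonneg (fun _ _ => zero_le_one) x
  have hI'nn : ∀ x, 0 ≤ I' x := fun x => Set.indicator_nonneg (fun _ _ => zero_le_one) x
  -- pointwise difference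
  have key : ∀ x, histo h z x - histo h z' x = c * (I x - I' x) := by
    intro x
    rw [histo_eq, histo_eq, ← mul_sub, ← Finset.sum_sub_distrib]
    congr 1
    rw [Finset.sum_eq_single j]
    · intro i _ hij
      rw [hdiff i hij, sub_self]
    · intro hji; exact absurd (Finset.mem_univ j) hji
  have hzint := histo_integrable hh z
  have hz'int := histo_integrable hh z'
  have habs : ∀ x, |histo h z x - histo h z' x| ≤ c * (I x + I' x) := by
    intro x
    rw [key x, abs_mul, abs_of_nonneg hc0]
    refine mul_le_mul_of_nonneg_left ?_ hc0
    calc |I x - I' x| ≤ |I x| + |I' x| := abs_sub _ _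
      _ = I x + I' x := by rw [abs_of_nonneg (hInn x), abs_of_nonneg (hI'nn x)]
  have hNne : (N : ℝ) ≠ 0 := Nat.cast_ne_zero.2 hN.ne'
  have hhk : h ^ k ≠ 0 := by positivity
  have part1 : (∫ x, |histo h z x - histo h z' x|) ≤ 2 / N := by
    have h1 : (∫ x, |histo h z x - histo h z' x|) ≤ ∫ x, c * (I x + I' x) := by
      refine integral_mono (hzint.sub hz'int).abs ((hIint.add hI'int).const_mul c) habs
    refine h1.trans ?_
    rw [integral_const_mul, integral_add hIint hI'int, ind_integral hh, ind_integral hh]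
    have : c * (h ^ k + h ^ k) = 2 / N := by
      rw [hc]; field_simp; ring
    rw [this]
  refine ⟨part1, ?_⟩
  -- f is integrable
  have hfint : Integrable f := by
    by_contra hf
    rw [integral_undef hf] at hf1
    norm_num at hf1
  have hA : Integrable (fun x => |histo h z x - f x|) := (hzint.sub hfint).abs
  have hB : Integrable (fun x => |histo h z' x - f x|) := (hz'int.sub hfint).abs
  calc abs ((∫ x, |histo h z x - f x|) - ∫ x, |histo h z' x - f x|)
      = abs (∫ x, (|histo h z x - f x| - |histo h z' x - f x|)) := by
        rw [integral_sub hA hB]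
    _ ≤ ∫ x, abs (|histo h z x - f x| - |histo h z' x - f x|) := by
        simpa [Real.norm_eq_abs] using
          norm_integral_le_integral_norm (μ := volume)
            (fun x => |histo h z x - f x| - |histo h z' x - f x|)
    _ ≤ ∫ x, |histo h z x - histo h z' x| := by
        refine integral_mono (hA.sub hB).abs (hzint.sub hz'int).abs fun x => ?_
        have := abs_abs_sub_abs_le_abs_sub (histo h z x - f x) (histo h z' x - f x)
        simpa using this
    _ ≤ 2 / N := part1
end
end
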